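/- Let T_xy be the bivariate formal power series over ℚ whose (r,s)-coefficient is r·s·N_bi(r,s,0)/(r! s!). Then, as formal power series, T_xy·(1 - T_x·T_y) = T_x·T_y. -/

import Mathlib

open Finset

/-- Number of simple connected bipartite graphs on the labeled vertex set
`Fin r ⊕ Fin s`, with all edges joining the two parts and exactly
`r + s - 1 + k` edges (so `k` is the Betti number). -/
noncomputable def Nbi (r s k : ℕ) : ℕ :=
  Nat.card {G : SimpleGraph (Fin r ⊕ Fin s) //
    G.Connected ∧
    (∀ a b, ¬ G.Adj (Sum.inl a) (Sum.inl b)) ∧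
    (∀ a b, ¬ G.Adj (Sum.inr a) (Sum.inr b)) ∧
    Nat.card G.edgeSet = r + s - 1 + k}

/-- `F_k(x,y) = ∑ N_bi(r,s,k) x^r y^s / (r! s!)`. -/
noncomputable def Fk (k : ℕ) : MvPowerSeries (Fin 2) ℚ :=
  fun m => (Nbi (m 0) (m 1) k : ℚ) / ((m 0).factorial * (m 1).factorial)

/-- `T_x = x ∂T/∂x`, coefficientwise `r · N_bi(r,s,0)/(r! s!)`. -/
noncomputable def Tx : MvPowerSeries (Fin 2) ℚ :=
  fun m => (m 0 : ℚ) * (Nbi (m 0) (m 1) 0 : ℚ) / ((m 0).factorial * (m 1).factorial)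

/-- `T_y = y ∂T/∂y`, coefficientwise `s · N_bi(r,s,0)/(r! s!)`. -/
noncomputable def Ty : MvPowerSeries (Fin 2) ℚ :=
  fun m => (m 1 : ℚ) * (Nbi (m 0) (m 1) 0 : ℚ) / ((m 0).factorial * (m 1).factorial)

noncomputable def Zs : MvPowerSeries (Fin 2) ℚ := Tx + Ty

noncomputable def Ws : MvPowerSeries (Fin 2) ℚ := Tx * Ty

/-- `T_xy`, coefficientwise `r·s·N_bi(r,s,0)/(r! s!)`. -/
noncomputable def Txy : MvPowerSeries (Fin 2) ℚ :=
  fun m => (m 0 : ℚ) * (m 1 : ℚ) * (Nbi (m 0) (m 1) 0 : ℚ) / ((m 0).factorial * (m 1).factorial)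

namespace Stmt9Aux

open Function Sum

set_option linter.unusedSectionVars false

/-- Parent-function encoding of a bipartite tree on `α ⊕ β` rooted at `z`. -/
def IsTF {α β : Type} (z : α ⊕ β) (f : α ⊕ β → α ⊕ β) : Prop :=
  f z = z ∧ (∀ v, v ≠ z → (f v).isLeft = !v.isLeft) ∧ ∀ v, ∃ n, f^[n] v = z

def TF (α β : Type) (z : α ⊕ β) : Type := {f : α ⊕ β → α ⊕ β // IsTF z f}

instance {α β : Type} [Finite α] [Finite β] (z : α ⊕ β) : Finite (TF α β z) :=
  Subtype.finite


lemma conj_iterate {γ δ : Type} (e : γ ≃ δ) (f : γ → γ) (n : ℕ) (x : δ) :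
    (⇑e ∘ f ∘ ⇑e.symm)^[n] x = e (f^[n] (e.symm x)) := by
  induction n generalizing x with
  | zero => simp
  | succ n ih =>
    rw [Function.iterate_succ_apply, Function.iterate_succ_apply]
    simp only [Function.comp_apply, ih, Equiv.symm_apply_apply]

lemma isTF_conj {α β α' β' : Type} {z : α ⊕ β} {f : α ⊕ β → α ⊕ β}
    (e : (α ⊕ β) ≃ (α' ⊕ β')) (hside : ∀ v, (e v).isLeft = v.isLeft)
    (h : IsTF z f) : IsTF (e z) (⇑e ∘ f ∘ ⇑e.symm) := by
  obtain ⟨h1, h2, h3⟩ := h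
  refine ⟨by simp [h1], ?_, ?_⟩
  · intro v hv
    have hv' : e.symm v ≠ z := by
      intro hh; apply hv; rw [← hh]; simp
    have := h2 (e.symm v) hv'
    simp only [Function.comp_apply, hside, this]
    rw [← hside (e.symm v)]
    simp
  · intro v
    obtain ⟨n, hn⟩ := h3 (e.symm v)
    exact ⟨n, by rw [conj_iterate, hn]⟩

lemma sumCongr_isLeft {α β α' β' : Type} (e1 : α ≃ α') (e2 : β ≃ β') (v : α ⊕ β) :
    (Equiv.sumCongr e1 e2 v).isLeft = v.isLeft := by
  cases v <;> rfl

def TFcongr {α α' β β' : Type} (e1 : α ≃ α') (e2 : β ≃ β') (z : α ⊕ β) :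
    TF α β z ≃ TF α' β' (Equiv.sumCongr e1 e2 z) where
  toFun f := ⟨⇑(Equiv.sumCongr e1 e2) ∘ f.1 ∘ ⇑(Equiv.sumCongr e1 e2).symm,
    isTF_conj _ (sumCongr_isLeft e1 e2) f.2⟩
  invFun g := ⟨⇑(Equiv.sumCongr e1 e2).symm ∘ g.1 ∘ ⇑(Equiv.sumCongr e1 e2), by
    have hside : ∀ v, ((Equiv.sumCongr e1 e2).symm v).isLeft = v.isLeft := by
      intro v
      rw [Equiv.sumCongr_symm]
      exact sumCongr_isLeft e1.symm e2.symm v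
    have := isTF_conj (Equiv.sumCongr e1 e2).symm hside g.2
    simpa using this⟩
  left_inv f := by
    apply Subtype.ext
    funext v
    simp
  right_inv g := by
    apply Subtype.ext
    funext v
    simp


section Lemmas
variable {α β : Type} {z : α ⊕ β} {f : α ⊕ β → α ⊕ β}

lemma IsTF.ne_self (hf : IsTF z f) {v : α ⊕ β} (hv : v ≠ z) : f v ≠ v := by
  intro h
  have := hf.2.1 v hv
  rw [h] at this
  cases v <;> simp at this

lemma IsTF.no2cycle (hf : IsTF z f) {v : α ⊕ β} (hv : v ≠ z) (h2 : f (f v) = v) : False := by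
  obtain ⟨n, hn⟩ := hf.2.2 v
  have key : ∀ m : ℕ, f^[2 * m] v = v := by
    intro m
    induction m with
    | zero => simp
    | succ m ih =>
      have h3 : 2 * (m + 1) = 2 + 2 * m := by ring
      rw [h3, Function.iterate_add_apply, ih]
      simpa using h2
  have h1 : f^[n + n] v = z := by
    rw [Function.iterate_add_apply, hn, Function.iterate_fixed hf.1]
  have h2' : f^[n + n] v = v := by
    have : n + n = 2 * n := by ring
    rw [this, key]
  exact hv (h2' ▸ h1 ▸ rfl)

lemma IsTF.step (hf : IsTF z f) {v : α ⊕ β} {n : ℕ} (hn : f^[n] v = z) : f^[n] (f v) = z := by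
  rw [← Function.iterate_succ_apply, Function.iterate_succ_apply', hn, hf.1]

end Lemmas

section Transfer
variable {r s : ℕ}

def egs (z : Fin r ⊕ Fin s) (f : Fin r ⊕ Fin s → Fin r ⊕ Fin s) : Set (Sym2 (Fin r ⊕ Fin s)) :=
  (fun v => s(v, f v)) '' {v | v ≠ z}

def Phi (z : Fin r ⊕ Fin s) (f : Fin r ⊕ Fin s → Fin r ⊕ Fin s) : SimpleGraph (Fin r ⊕ Fin s) :=
  SimpleGraph.fromEdgeSet (egs z f)

variable {z : Fin r ⊕ Fin s} {f : Fin r ⊕ Fin s → Fin r ⊕ Fin s}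

lemma edgeSet_Phi (hf : IsTF z f) : (Phi z f).edgeSet = egs z f := by
  rw [Phi, SimpleGraph.edgeSet_fromEdgeSet]
  rw [_root_.sdiff_eq_self_iff_disjoint]
  rw [Set.disjoint_left]
  rintro e he ⟨v, hv, rfl⟩
  simp only [Sym2.diagSet_eq_setOfPred_isDiag, Set.mem_setOf_eq, Sym2.mk_isDiag_iff] at he
  exact hf.ne_self hv he.symm

lemma adj_Phi_of (hf : IsTF z f) {v : Fin r ⊕ Fin s} (hv : v ≠ z) : (Phi z f).Adj v (f v) := by
  rw [Phi, SimpleGraph.fromEdgeSet_adj]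
  exact ⟨⟨v, hv, rfl⟩, (hf.ne_self hv).symm⟩

lemma reach_Phi (hf : IsTF z f) (v : Fin r ⊕ Fin s) : (Phi z f).Reachable v z := by
  obtain ⟨n, hn⟩ := hf.2.2 v
  induction n generalizing v with
  | zero =>
    simp only [Function.iterate_zero_apply] at hn
    subst hn; exact SimpleGraph.Reachable.refl _
  | succ n ih =>
    by_cases hv : v = z
    · subst hv; exact SimpleGraph.Reachable.refl _
    · have h1 : f^[n] (f v) = z := by rwa [← Function.iterate_succ_apply]
      exact ((adj_Phi_of hf hv).reachable).trans (ih _ h1)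

lemma card_egs (hf : IsTF z f) : (egs z f).ncard = r + s - 1 := by
  rw [egs, Set.ncard_image_of_injOn]
  · have h1 : ({v | v ≠ z} : Set (Fin r ⊕ Fin s)) = {z}ᶜ := by
      ext v; simp
    rw [h1]
    have h2 := Set.ncard_add_ncard_compl ({z} : Set (Fin r ⊕ Fin s))
    rw [Set.ncard_singleton] at h2
    have h3 : Nat.card (Fin r ⊕ Fin s) = r + s := by
      simp [Nat.card_eq_fintype_card]
    omega
  · rintro u hu v hv huv
    simp only [Sym2.eq_iff] at huv
    rcases huv with ⟨h1, _⟩ | ⟨h1, h2⟩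
    · exact h1
    · exfalso
      exact hf.no2cycle hv (by rw [← h1, h2])

end Transfer

section Transfer2
variable {r s : ℕ} {z : Fin r ⊕ Fin s} {f : Fin r ⊕ Fin s → Fin r ⊕ Fin s}

def GraphTy (r s : ℕ) : Type := {G : SimpleGraph (Fin r ⊕ Fin s) //
    G.Connected ∧
    (∀ a b, ¬ G.Adj (Sum.inl a) (Sum.inl b)) ∧
    (∀ a b, ¬ G.Adj (Sum.inr a) (Sum.inr b)) ∧
    Nat.card G.edgeSet = r + s - 1 + 0}

lemma Nbi_eq_card_GraphTy (r s : ℕ) : Nbi r s 0 = Nat.card (GraphTy r s) := rfl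

lemma Phi_mem (hf : IsTF z f) :
    (Phi z f).Connected ∧
    (∀ a b, ¬ (Phi z f).Adj (Sum.inl a) (Sum.inl b)) ∧
    (∀ a b, ¬ (Phi z f).Adj (Sum.inr a) (Sum.inr b)) ∧
    Nat.card (Phi z f).edgeSet = r + s - 1 + 0 := by
  have hadj : ∀ x y : Fin r ⊕ Fin s, (Phi z f).Adj x y →
      (x.isLeft = !y.isLeft) := by
    intro x y hxy
    rw [Phi, SimpleGraph.fromEdgeSet_adj] at hxy
    obtain ⟨⟨v, hv, he⟩, hne⟩ := hxy
    rw [Sym2.eq_iff] at he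
    rcases he with ⟨h1, h2⟩ | ⟨h1, h2⟩
    · rw [← h1, ← h2, hf.2.1 v hv, Bool.not_not]
    · rw [← h1, ← h2]
      exact hf.2.1 v hv
  refine ⟨?_, ?_, ?_, ?_⟩
  · rw [SimpleGraph.connected_iff]
    refine ⟨fun u v => (reach_Phi hf u).trans (reach_Phi hf v).symm, ⟨z⟩⟩
  · intro a b h
    have := hadj _ _ h
    simp at this
  · intro a b h
    have := hadj _ _ h
    simp at this
  · rw [Nat.card_coe_set_eq, edgeSet_Phi hf, card_egs hf]
    omega

noncomputable def Phi' (z : Fin r ⊕ Fin s) (f : TF (Fin r) (Fin s) z) : GraphTy r s :=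
  ⟨Phi z f.1, Phi_mem f.2⟩

lemma Phi'_inj : Function.Injective (Phi' z) := by
  rintro ⟨f, hf⟩ ⟨g, hg⟩ hfg
  have hE : egs z f = egs z g := by
    have := congrArg (fun G => G.1.edgeSet) hfg
    simpa [Phi', edgeSet_Phi hf, edgeSet_Phi hg] using this
  -- heights
  have key : ∀ k : ℕ, ∀ v, v ≠ z → f^[k] v = z → f v = g v := by
    intro k
    induction k with
    | zero => intro v hv h0; simp only [Function.iterate_zero_apply] at h0; exact absurd h0 hv
    | succ k ih =>
      intro v hv hk
      have hmem : s(v, f v) ∈ egs z g := by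
        rw [← hE]; exact ⟨v, hv, rfl⟩
      obtain ⟨u, hu, he⟩ := hmem
      rw [Sym2.eq_iff] at he
      rcases he with ⟨rfl, h2⟩ | ⟨h1, h2⟩
      · exact h2.symm
      · -- h1 : u = f v, h2 : g u = v
        exfalso
        have hx : f^[k] (f v) = z := by
          rwa [← Function.iterate_succ_apply]
        by_cases hxz : f v = z
        · apply hv
          rw [← h2, h1, hxz, hg.1]
        · have h3 := ih (f v) hxz hx
          exact hf.no2cycle hv (by rw [h3, ← h1, h2])
  apply Subtype.ext
  funext v
  show f v = g v
  by_cases hv : v = z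
  · rw [hv, hf.1, hg.1]
  · obtain ⟨n, hn⟩ := hf.2.2 v
    exact key n v hv hn

end Transfer2

section Surj
variable {r s : ℕ}

lemma Phi'_surj (z : Fin r ⊕ Fin s) : Function.Surjective (Phi' z) := by
  rintro ⟨G, conn, hb1, hb2, hcard⟩
  have hreach : ∀ v, G.Reachable v z := fun v => conn.preconnected v z
  have hpar : ∀ v : Fin r ⊕ Fin s, v ≠ z → ∃ y, G.Adj v y ∧ G.dist y z < G.dist v z := by
    intro v hv
    obtain ⟨p, hp⟩ := (hreach v).exists_walk_length_eq_dist
    cases p with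
    | nil => exact absurd rfl hv
    | @cons _ y _ hadj q =>
      refine ⟨y, hadj, ?_⟩
      have h1 : G.dist y z ≤ q.length := SimpleGraph.dist_le q
      rw [SimpleGraph.Walk.length_cons] at hp
      omega
  classical
  set f : Fin r ⊕ Fin s → Fin r ⊕ Fin s := fun v =>
    if hv : v = z then z else Classical.choose (hpar v hv) with hfdef
  have hf0 : f z = z := by simp [hfdef]
  have hfspec : ∀ v (hv : v ≠ z), G.Adj v (f v) ∧ G.dist (f v) z < G.dist v z := by
    intro v hv
    have := Classical.choose_spec (hpar v hv)
    simpa [hfdef, hv] using this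
  have hside : ∀ v, v ≠ z → (f v).isLeft = !v.isLeft := by
    intro v hv
    have hadj := (hfspec v hv).1
    rcases h : f v with a' | b' <;> rcases hv2 : v with a | b
    · rw [h, hv2] at hadj; exact absurd hadj (hb1 a a')
    · rfl
    · rfl
    · rw [h, hv2] at hadj; exact absurd hadj (hb2 b b')
  have hreachf : ∀ v, ∃ n, f^[n] v = z := by
    intro v
    have : ∀ k, ∀ v, G.dist v z ≤ k → ∃ n, f^[n] v = z := by
      intro k
      induction k with
      | zero =>
        intro v hvk
        by_cases hv : v = z
        · exact ⟨0, hv⟩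
        · exfalso
          have := (hfspec v hv).2
          omega
      | succ k ih =>
        intro v hvk
        by_cases hv : v = z
        · exact ⟨0, hv⟩
        · have h2 := (hfspec v hv).2
          obtain ⟨n, hn⟩ := ih (f v) (by omega)
          exact ⟨n + 1, by rwa [Function.iterate_succ_apply]⟩
    exact this (G.dist v z) v le_rfl
  have hf : IsTF z f := ⟨hf0, hside, hreachf⟩
  refine ⟨⟨f, hf⟩, ?_⟩
  apply Subtype.ext
  show Phi z f = G
  have hsub : egs z f ⊆ G.edgeSet := by
    rintro e ⟨v, hv, rfl⟩
    exact (hfspec v hv).1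
  have hEeq : egs z f = G.edgeSet := by
    apply Set.eq_of_subset_of_ncard_le hsub
    rw [← Nat.card_coe_set_eq, hcard, card_egs hf]
    omega
  rw [← SimpleGraph.edgeSet_inj, edgeSet_Phi hf, hEeq]

theorem card_TF_fin (r s : ℕ) (z : Fin r ⊕ Fin s) :
    Nat.card (TF (Fin r) (Fin s) z) = Nbi r s 0 := by
  rw [Nbi_eq_card_GraphTy]
  exact Nat.card_eq_of_bijective (Phi' z) ⟨Phi'_inj, Phi'_surj z⟩

end Surj


theorem card_TF {α β : Type} [Fintype α] [Fintype β] (z : α ⊕ β) :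
    Nat.card (TF α β z) = Nbi (Fintype.card α) (Fintype.card β) 0 := by
  rw [Nat.card_congr (TFcongr (Fintype.equivFin α) (Fintype.equivFin β) z)]
  exact card_TF_fin _ _ _


section Chains
variable {γ : Type} {f : γ → γ}

lemma chain_step {v w : γ} {n : ℕ} (hn : f^[n] v = w) (hv : v ≠ w) :
    ∃ m, m < n ∧ f^[m] (f v) = w := by
  cases n with
  | zero => exact absurd hn hv
  | succ n => exact ⟨n, Nat.lt_succ_self n, by rwa [← Function.iterate_succ_apply]⟩

/-- if the chain of `v` hits `w` and `v ≠ w` then the chain of `f v` hits `w`. -/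
lemma chain_mem_step {v w : γ} (h : ∃ n, f^[n] v = w) (hv : v ≠ w) :
    ∃ n, f^[n] (f v) = w := by
  obtain ⟨n, hn⟩ := h
  obtain ⟨m, _, hm⟩ := chain_step hn hv
  exact ⟨m, hm⟩

lemma chain_mem_of_step {v w : γ} (h : ∃ n, f^[n] (f v) = w) :
    ∃ n, f^[n] v = w := by
  obtain ⟨n, hn⟩ := h
  exact ⟨n + 1, by rwa [Function.iterate_succ_apply]⟩

lemma fixed_chain_not_mem {z w : γ} (hz : f z = z) (hw : w ≠ z) : ¬ ∃ n, f^[n] z = w := by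
  rintro ⟨n, hn⟩
  rw [Function.iterate_fixed hz] at hn
  exact hw hn.symm

/-- the parent of `w` is not in the subtree of `w`, provided the chain of `w`
reaches a fixpoint `z ≠ w`. -/
lemma parent_not_in_subtree {w z : γ} (hz : f z = z) (hwz : w ≠ z)
    (hreach : ∃ n, f^[n] w = z) : ¬ ∃ n, f^[n] (f w) = w := by
  rintro ⟨m, hm⟩
  have hcyc : ∀ k, f^[k * (m + 1)] w = w := by
    intro k
    induction k with
    | zero => simp
    | succ k ih =>
      have h1 : f^[m + 1] w = w := by rw [Function.iterate_succ_apply]; exact hm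
      rw [Nat.succ_mul, Function.iterate_add_apply, h1, ih]
  obtain ⟨N, hN⟩ := hreach
  have h1 : f^[N * (m + 1)] w = w := hcyc N
  have h2 : N * (m + 1) = (N * (m + 1) - N) + N := by
    have : N ≤ N * (m + 1) := Nat.le_mul_of_pos_right N (Nat.succ_pos m)
    omega
  rw [h2, Function.iterate_add_apply, hN, Function.iterate_fixed hz] at h1
  exact hwz h1.symm

lemma chain_not_mem_step {v w : γ} (h : ¬ ∃ n, f^[n] v = w) : ¬ ∃ n, f^[n] (f v) = w :=
  fun hh => h (chain_mem_of_step hh)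

end Chains

section MasterDefs
variable {α β : Type} [DecidableEq α] [DecidableEq β]

abbrev PT (p : Finset α × Finset β) : Type := ↥p.1 ⊕ ↥p.2
abbrev QT (p : Finset α × Finset β) : Type := {a : α // a ∉ p.1} ⊕ {b : β // b ∉ p.2}

def iP (p : Finset α × Finset β) : PT p → α ⊕ β := Sum.map Subtype.val Subtype.val
def iQ (p : Finset α × Finset β) : QT p → α ⊕ β := Sum.map Subtype.val Subtype.val

set_option linter.unusedSectionVars false

lemma iP_inj {p : Finset α × Finset β} : Function.Injective (iP p) := by
  rintro (x | x) (y | y) h <;> simp [iP] at h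
  · exact congrArg inl h
  · exact congrArg inr h

lemma iQ_inj {p : Finset α × Finset β} : Function.Injective (iQ p) := by
  rintro (x | x) (y | y) h <;> simp [iQ] at h
  · exact congrArg inl (Subtype.ext h)
  · exact congrArg inr (Subtype.ext h)

lemma isLeft_iP {p : Finset α × Finset β} (x : PT p) : (iP p x).isLeft = x.isLeft := by
  cases x <;> rfl

lemma isLeft_iQ {p : Finset α × Finset β} (y : QT p) : (iQ p y).isLeft = y.isLeft := by
  cases y <;> rfl

lemma iP_ne_iQ {p : Finset α × Finset β} (x : PT p) (y : QT p) : iP p x ≠ iQ p y := by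
  rcases x with x | x <;> rcases y with y | y <;> simp [iP, iQ]
  · intro h; exact y.2 (h ▸ x.2)
  · intro h; exact y.2 (h ▸ x.2)

lemma mem_or_not (p : Finset α × Finset β) (v : α ⊕ β) :
    (∃ x : PT p, v = iP p x) ∨ (∃ y : QT p, v = iQ p y) := by
  rcases v with a | b
  · by_cases h : a ∈ p.1
    · exact Or.inl ⟨inl ⟨a, h⟩, rfl⟩
    · exact Or.inr ⟨inl ⟨a, h⟩, rfl⟩
  · by_cases h : b ∈ p.2
    · exact Or.inl ⟨inr ⟨b, h⟩, rfl⟩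
    · exact Or.inr ⟨inr ⟨b, h⟩, rfl⟩

def liftP (p : Finset α × Finset β) : (v : α ⊕ β) → (∀ a, v = inl a → a ∈ p.1) → (∀ b, v = inr b → b ∈ p.2) → PT p
  | inl a, h1, _ => inl ⟨a, h1 a rfl⟩
  | inr b, _, h2 => inr ⟨b, h2 b rfl⟩

def liftQ (p : Finset α × Finset β) : (v : α ⊕ β) → (∀ a, v = inl a → a ∉ p.1) → (∀ b, v = inr b → b ∉ p.2) → QT p
  | inl a, h1, _ => inl ⟨a, h1 a rfl⟩
  | inr b, _, h2 => inr ⟨b, h2 b rfl⟩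

lemma iP_liftP {p : Finset α × Finset β} (v : α ⊕ β) (h1 : ∀ a, v = inl a → a ∈ p.1)
    (h2 : ∀ b, v = inr b → b ∈ p.2) : iP p (liftP p v h1 h2) = v := by
  cases v <;> rfl

lemma iQ_liftQ {p : Finset α × Finset β} (v : α ⊕ β) (h1 : ∀ a, v = inl a → a ∉ p.1)
    (h2 : ∀ b, v = inr b → b ∉ p.2) : iQ p (liftQ p v h1 h2) = v := by
  cases v <;> rfl

def glueFun (p : Finset α × Finset β) (w' : PT p) (g1 : PT p → PT p)
    (m : QT p) (g2 : QT p → QT p) : α ⊕ β → α ⊕ β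
  | inl a =>
      if h : a ∈ p.1 then
        (if (inl ⟨a, h⟩ : PT p) = w' then iQ p m else iP p (g1 (inl ⟨a, h⟩)))
      else iQ p (g2 (inl ⟨a, h⟩))
  | inr b =>
      if h : b ∈ p.2 then
        (if (inr ⟨b, h⟩ : PT p) = w' then iQ p m else iP p (g1 (inr ⟨b, h⟩)))
      else iQ p (g2 (inr ⟨b, h⟩))

variable {p : Finset α × Finset β} {w' : PT p} {g1 : PT p → PT p} {m : QT p} {g2 : QT p → QT p}

lemma glue_iP (x : PT p) :
    glueFun p w' g1 m g2 (iP p x) = if x = w' then iQ p m else iP p (g1 x) := by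
  rcases x with x | x <;> simp [glueFun, iP, x.2]

lemma glue_iQ (y : QT p) :
    glueFun p w' g1 m g2 (iQ p y) = iQ p (g2 y) := by
  rcases y with y | y <;> simp [glueFun, iQ, y.2]

end MasterDefs

section MasterGlue
variable {α β : Type} [DecidableEq α] [DecidableEq β]
variable {p : Finset α × Finset β} {w' : PT p} {g1 : PT p → PT p} {m : QT p} {g2 : QT p → QT p}
variable {u : {a : α // a ∉ p.1}} {c : Bool}

lemma glue_iterate_iQ (n : ℕ) (y : QT p) :
    (glueFun p w' g1 m g2)^[n] (iQ p y) = iQ p (g2^[n] y) := by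
  induction n generalizing y with
  | zero => rfl
  | succ n ih =>
    rw [Function.iterate_succ_apply, Function.iterate_succ_apply, glue_iQ, ih]

lemma glue_reach_P (ht2 : IsTF (inl u) g2) :
    ∀ n (x : PT p), g1^[n] x = w' → ∃ k, (glueFun p w' g1 m g2)^[k] (iP p x) = iQ p (inl u) := by
  intro n
  induction n with
  | zero =>
    intro x hx
    simp only [Function.iterate_zero_apply] at hx
    subst hx
    obtain ⟨n2, hn2⟩ := ht2.2.2 m
    refine ⟨n2 + 1, ?_⟩
    rw [Function.iterate_succ_apply, glue_iP, if_pos rfl, glue_iterate_iQ, hn2]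
  | succ n ih =>
    intro x hx
    by_cases hxw : x = w'
    · subst hxw
      obtain ⟨n2, hn2⟩ := ht2.2.2 m
      refine ⟨n2 + 1, ?_⟩
      rw [Function.iterate_succ_apply, glue_iP, if_pos rfl, glue_iterate_iQ, hn2]
    · rw [Function.iterate_succ_apply] at hx
      obtain ⟨k, hk⟩ := ih (g1 x) hx
      refine ⟨k + 1, ?_⟩
      rw [Function.iterate_succ_apply, glue_iP, if_neg hxw]
      exact hk

lemma glue_reach_P_toW :
    ∀ n (x : PT p), g1^[n] x = w' → ∃ k, (glueFun p w' g1 m g2)^[k] (iP p x) = iP p w' := by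
  intro n
  induction n with
  | zero =>
    intro x hx
    simp only [Function.iterate_zero_apply] at hx
    exact ⟨0, by rw [hx]; rfl⟩
  | succ n ih =>
    intro x hx
    by_cases hxw : x = w'
    · exact ⟨0, by rw [hxw]; rfl⟩
    · rw [Function.iterate_succ_apply] at hx
      obtain ⟨k, hk⟩ := ih (g1 x) hx
      refine ⟨k + 1, ?_⟩
      rw [Function.iterate_succ_apply, glue_iP, if_neg hxw]
      exact hk

lemma glue_isTF (hw : w'.isLeft = c) (hm : m.isLeft = !c)
    (ht1 : IsTF w' g1) (ht2 : IsTF (inl u) g2) :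
    IsTF (iQ p (inl u)) (glueFun p w' g1 m g2) := by
  refine ⟨?_, ?_, ?_⟩
  · rw [glue_iQ, ht2.1]
  · intro v hv
    rcases mem_or_not p v with ⟨x, rfl⟩ | ⟨y, rfl⟩
    · rw [glue_iP]
      by_cases hxw : x = w'
      · rw [if_pos hxw, isLeft_iQ, hm, isLeft_iP, hxw, hw]
      · rw [if_neg hxw, isLeft_iP, isLeft_iP]
        exact ht1.2.1 x hxw
    · have hy : y ≠ inl u := fun h => hv (congrArg (iQ p) h)
      rw [glue_iQ, isLeft_iQ, isLeft_iQ]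
      exact ht2.2.1 y hy
  · intro v
    rcases mem_or_not p v with ⟨x, rfl⟩ | ⟨y, rfl⟩
    · obtain ⟨n, hn⟩ := ht1.2.2 x
      exact glue_reach_P ht2 n x hn
    · obtain ⟨n, hn⟩ := ht2.2.2 y
      exact ⟨n, by rw [glue_iterate_iQ, hn]⟩

lemma glue_S_eq (ht1 : IsTF w' g1) :
    {v | ∃ n, (glueFun p w' g1 m g2)^[n] v = iP p w'} = Set.range (iP p) := by
  ext v
  constructor
  · rintro ⟨n, hn⟩
    rcases mem_or_not p v with ⟨x, rfl⟩ | ⟨y, rfl⟩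
    · exact ⟨x, rfl⟩
    · exfalso
      rw [glue_iterate_iQ] at hn
      exact iP_ne_iQ w' (g2^[n] y) hn.symm
  · rintro ⟨x, rfl⟩
    obtain ⟨n, hn⟩ := ht1.2.2 x
    exact glue_reach_P_toW n x hn

end MasterGlue

section MasterMap
variable (α β : Type) [DecidableEq α] [DecidableEq β]

def LHSt (c : Bool) : Type :=
  Σ _u : α, ({w : α ⊕ β // w.isLeft = c ∧ w ≠ inl _u} × TF α β (inl _u))

def RHSt (c : Bool) (p : Finset α × Finset β) : Type :=
  (Σ w : {x : PT p // x.isLeft = c}, TF ↥p.1 ↥p.2 w.1) ×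
  (Σ _u : {a : α // a ∉ p.1},
    ({m : QT p // m.isLeft = !c} ×
      TF {a : α // a ∉ p.1} {b : β // b ∉ p.2} (inl _u)))

def Glue (c : Bool) : (Σ p : Finset α × Finset β, RHSt α β c p) → LHSt α β c
  | ⟨p, ⟨⟨⟨w', hw⟩, t1⟩, ⟨u, ⟨⟨m, hm⟩, t2⟩⟩⟩⟩ =>
    ⟨u.1, ⟨⟨iP p w', ⟨by (rw [isLeft_iP]; exact hw),
        fun h => iP_ne_iQ w' (inl u) h⟩⟩,
      ⟨glueFun p w' t1.1 m t2.1, glue_isTF hw hm t1.2 t2.2⟩⟩⟩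

variable {α β}

set_option linter.unusedSectionVars false

lemma mem_range_iP_inl {p : Finset α × Finset β} (a : α) :
    (inl a : α ⊕ β) ∈ Set.range (iP p) ↔ a ∈ p.1 := by
  constructor
  · rintro ⟨x | x, h⟩
    · simp only [iP, Sum.map_inl] at h
      cases h
      exact x.2
    · simp [iP] at h
  · intro h; exact ⟨inl ⟨a, h⟩, rfl⟩

lemma mem_range_iP_inr {p : Finset α × Finset β} (b : β) :
    (inr b : α ⊕ β) ∈ Set.range (iP p) ↔ b ∈ p.2 := by
  constructor
  · rintro ⟨x | x, h⟩
    · simp [iP] at h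
    · simp only [iP, Sum.map_inr] at h
      cases h
      exact x.2
  · intro h; exact ⟨inr ⟨b, h⟩, rfl⟩

lemma Glue_inj (c : Bool) : Function.Injective (Glue α β c) := by
  rintro ⟨⟨pa, pb⟩, ⟨⟨⟨w1, hw1⟩, ⟨g1, hg1⟩⟩, ⟨⟨uv, hu⟩, ⟨⟨m1, hm1⟩, ⟨k1, hk1⟩⟩⟩⟩⟩
    ⟨⟨pa', pb'⟩, ⟨⟨⟨w2, hw2⟩, ⟨g2, hg2⟩⟩, ⟨⟨uv', hu'⟩, ⟨⟨m2, hm2⟩, ⟨k2, hk2⟩⟩⟩⟩⟩ heq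
  simp only [Glue] at heq
  obtain ⟨h0, h1⟩ := Sigma.mk.inj_iff.mp heq
  subst h0
  have h1' := eq_of_heq h1
  have hW : iP (pa, pb) w1 = iP (pa', pb') w2 := congrArg (fun q => q.1.1) h1'
  have hF : glueFun (pa, pb) w1 g1 m1 k1 = glueFun (pa', pb') w2 g2 m2 k2 :=
    congrArg (fun q => q.2.1) h1'
  -- recover the finsets
  have hS : Set.range (iP (pa, pb)) = Set.range (iP (pa', pb')) := by
    rw [← glue_S_eq (g1 := g1) (m := m1) (g2 := k1) hg1,
        ← glue_S_eq (g1 := g2) (m := m2) (g2 := k2) hg2, hF, hW]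
  have hpa : pa = pa' := by
    ext a
    rw [← mem_range_iP_inl (p := (pa, pb)) a, ← mem_range_iP_inl (p := (pa', pb')) a, hS]
  have hpb : pb = pb' := by
    ext b
    rw [← mem_range_iP_inr (p := (pa, pb)) b, ← mem_range_iP_inr (p := (pa', pb')) b, hS]
  subst hpa; subst hpb
  -- recover w'
  have hw' : w1 = w2 := iP_inj hW
  subst hw'
  -- recover m
  have hm' : m1 = m2 := by
    have := congrFun hF (iP (pa, pb) w1)
    rw [glue_iP, glue_iP, if_pos rfl, if_pos rfl] at this
    exact iQ_inj this
  subst hm'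
  -- recover g1
  have hg' : g1 = g2 := by
    funext x
    by_cases hx : x = w1
    · rw [hx, hg1.1, hg2.1]
    · have := congrFun hF (iP (pa, pb) x)
      rw [glue_iP, glue_iP, if_neg hx, if_neg hx] at this
      exact iP_inj this
  subst hg'
  -- recover g2
  have hk' : k1 = k2 := by
    funext y
    have := congrFun hF (iQ (pa, pb) y)
    rw [glue_iQ, glue_iQ] at this
    exact iQ_inj this
  subst hk'
  rfl

end MasterMap

section MasterSurj
variable {α β : Type} [DecidableEq α] [DecidableEq β] [Fintype α] [Fintype β]

lemma Glue_surj (c : Bool) : Function.Surjective (Glue α β c) := by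
  rintro ⟨u0, ⟨⟨w, hwc, hwne⟩, ⟨f, hf⟩⟩⟩
  classical
  set S : Set (α ⊕ β) := {v | ∃ n, f^[n] v = w} with hSdef
  have hwS : w ∈ S := ⟨0, rfl⟩
  have hzS : (inl u0 : α ⊕ β) ∉ S := fixed_chain_not_mem hf.1 hwne
  set pa : Finset α := Finset.univ.filter (fun a => (inl a : α ⊕ β) ∈ S) with hpa
  set pb : Finset β := Finset.univ.filter (fun b => (inr b : α ⊕ β) ∈ S) with hpb
  set p : Finset α × Finset β := (pa, pb) with hp
  have hPa : ∀ a : α, a ∈ p.1 ↔ (inl a : α ⊕ β) ∈ S := by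
    intro a; simp [hp, hpa]
  have hPb : ∀ b : β, b ∈ p.2 ↔ (inr b : α ⊕ β) ∈ S := by
    intro b; simp [hp, hpb]
  have hiPS : ∀ x : PT p, iP p x ∈ S := by
    rintro (x | x)
    · exact (hPa x.1).1 x.2
    · exact (hPb x.1).1 x.2
  have hiQS : ∀ y : QT p, iQ p y ∉ S := by
    rintro (y | y)
    · exact fun h => y.2 ((hPa y.1).2 h)
    · exact fun h => y.2 ((hPb y.1).2 h)
  -- the root of the subtree
  have hwP : ∃ x : PT p, iP p x = w := by
    rcases hww : w with a | b
    · exact ⟨inl ⟨a, (hPa a).2 (hww ▸ hwS)⟩, rfl⟩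
    · exact ⟨inr ⟨b, (hPb b).2 (hww ▸ hwS)⟩, rfl⟩
  obtain ⟨w', hw'⟩ := hwP
  have hwc' : w'.isLeft = c := by rw [← isLeft_iP, hw', hwc]
  -- g1 : the subtree part
  have hstep : ∀ x : PT p, x ≠ w' → f (iP p x) ∈ S := by
    intro x hx
    refine chain_mem_step (hiPS x) (fun h => hx (iP_inj (h.trans hw'.symm)))
  set g1 : PT p → PT p := fun x =>
    if hx : x = w' then w'
    else liftP p (f (iP p x)) (fun a ha => (hPa a).2 (ha ▸ hstep x hx))
      (fun b hb => (hPb b).2 (hb ▸ hstep x hx)) with hg1def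
  have hg1val : ∀ x : PT p, x ≠ w' → iP p (g1 x) = f (iP p x) := by
    intro x hx
    simp only [hg1def, dif_neg hx]
    exact iP_liftP _ _ _
  have hiPz : ∀ x : PT p, iP p x ≠ inl u0 := by
    intro x h
    exact hzS (h ▸ hiPS x)
  have hg1 : IsTF w' g1 := by
    refine ⟨by simp [hg1def], ?_, ?_⟩
    · intro x hx
      rw [← isLeft_iP (g1 x), hg1val x hx, hf.2.1 _ (hiPz x), isLeft_iP]
    · intro x
      obtain ⟨n, hn⟩ := hiPS x
      induction n generalizing x with
      | zero =>
        refine ⟨0, ?_⟩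
        simp only [Function.iterate_zero_apply] at hn ⊢
        exact iP_inj (hn.trans hw'.symm)
      | succ n ih =>
        by_cases hx : x = w'
        · exact ⟨0, by simp [hx]⟩
        · rw [Function.iterate_succ_apply, ← hg1val x hx] at hn
          obtain ⟨k, hk⟩ := ih (g1 x) hn
          exact ⟨k + 1, by rwa [Function.iterate_succ_apply]⟩
  -- the data on the complement
  have hu0 : u0 ∉ p.1 := fun h => hzS ((hPa u0).1 h)
  have hfwS : f w ∉ S := parent_not_in_subtree hf.1 hwne (hf.2.2 w)
  have hmQ : ∃ y : QT p, iQ p y = f w := by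
    rcases hfw : f w with a | b
    · exact ⟨inl ⟨a, fun h => (hfw ▸ hfwS) ((hPa a).1 h)⟩, rfl⟩
    · exact ⟨inr ⟨b, fun h => (hfw ▸ hfwS) ((hPb b).1 h)⟩, rfl⟩
  obtain ⟨m, hm'⟩ := hmQ
  have hmside : m.isLeft = !c := by
    rw [← isLeft_iQ, hm', hf.2.1 w hwne, hwc]
  have hQstep : ∀ y : QT p, f (iQ p y) ∉ S := fun y => chain_not_mem_step (hiQS y)
  set g2 : QT p → QT p := fun y =>
    liftQ p (f (iQ p y)) (fun a ha => fun h => (ha ▸ hQstep y) ((hPa a).1 h))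
      (fun b hb => fun h => (hb ▸ hQstep y) ((hPb b).1 h)) with hg2def
  have hg2val : ∀ y : QT p, iQ p (g2 y) = f (iQ p y) := by
    intro y
    simp only [hg2def]
    exact iQ_liftQ _ _ _
  set u' : {a : α // a ∉ p.1} := ⟨u0, hu0⟩ with hu'def
  have hiQu : iQ p (inl u') = inl u0 := rfl
  have hg2iter : ∀ n (y : QT p), iQ p (g2^[n] y) = f^[n] (iQ p y) := by
    intro n
    induction n with
    | zero => intro y; rfl
    | succ n ih =>
      intro y
      rw [Function.iterate_succ_apply, Function.iterate_succ_apply, ← hg2val, ih]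
  have hg2 : IsTF (inl u') g2 := by
    refine ⟨?_, ?_, ?_⟩
    · apply iQ_inj
      rw [hg2val]
      exact hf.1
    · intro y hy
      have hyz : iQ p y ≠ inl u0 := by
        rw [← hiQu]
        exact fun h => hy (iQ_inj h)
      rw [← isLeft_iQ (g2 y), hg2val, hf.2.1 _ hyz, isLeft_iQ]
    · intro y
      obtain ⟨n, hn⟩ := hf.2.2 (iQ p y)
      refine ⟨n, iQ_inj ?_⟩
      rw [hg2iter, hn]
      rfl
  refine ⟨⟨p, ⟨⟨⟨w', hwc'⟩, ⟨g1, hg1⟩⟩, ⟨u', ⟨⟨m, hmside⟩, ⟨g2, hg2⟩⟩⟩⟩⟩, ?_⟩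
  simp only [Glue]
  refine congrArg (Sigma.mk u0) ?_
  refine Prod.ext ?_ ?_
  · apply Subtype.ext
    exact hw'
  · apply Subtype.ext
    funext v
    show glueFun p w' g1 m g2 v = f v
    rcases mem_or_not p v with ⟨x, rfl⟩ | ⟨y, rfl⟩
    · rw [glue_iP]
      by_cases hx : x = w'
      · rw [if_pos hx, hm', hx, hw']
      · rw [if_neg hx, hg1val x hx]
    · rw [glue_iQ, hg2val]

end MasterSurj



section Counting
open Finset

lemma ncard_sigma {ι : Type} [Fintype ι] (g : ι → Type) [∀ i, Finite (g i)] :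
    Nat.card (Σ i, g i) = ∑ i, Nat.card (g i) := by
  letI : ∀ i, Fintype (g i) := fun i => Fintype.ofFinite (g i)
  simp only [Nat.card_eq_fintype_card]
  exact Fintype.card_sigma

-- side subtype equivs
def leftSideEquiv (γ δ : Type) : {x : γ ⊕ δ // x.isLeft = true} ≃ γ where
  toFun x := match x with
    | ⟨inl a, _⟩ => a
  invFun a := ⟨inl a, rfl⟩
  left_inv x := match x with
    | ⟨inl a, _⟩ => rfl
  right_inv a := rfl

def rightSideEquiv (γ δ : Type) : {x : γ ⊕ δ // x.isLeft = false} ≃ δ where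
  toFun x := match x with
    | ⟨inr b, _⟩ => b
  invFun b := ⟨inr b, rfl⟩
  left_inv x := match x with
    | ⟨inr b, _⟩ => rfl
  right_inv b := rfl

def marksFalseEquiv (γ δ : Type) (u : γ) :
    {w : γ ⊕ δ // w.isLeft = false ∧ w ≠ inl u} ≃ δ where
  toFun x := match x with
    | ⟨inr b, _⟩ => b
  invFun b := ⟨inr b, rfl, by simp⟩
  left_inv x := match x with
    | ⟨inr b, _⟩ => rfl
  right_inv b := rfl

def marksTrueEquiv (γ δ : Type) (u : γ) :
    {w : γ ⊕ δ // w.isLeft = true ∧ w ≠ inl u} ≃ {a : γ // a ≠ u} where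
  toFun x := match x with
    | ⟨inl a, h⟩ => ⟨a, fun e => h.2 (congrArg inl e)⟩
  invFun a := ⟨inl a.1, rfl, fun h => a.2 (by injection h)⟩
  left_inv x := match x with
    | ⟨inl a, h⟩ => rfl
  right_inv a := rfl

end Counting

section Counting2
open Finset

instance {α β : Type} [DecidableEq α] [DecidableEq β] [Finite α] [Finite β]
    (c : Bool) (p : Finset α × Finset β) : Finite (RHSt α β c p) :=
  inferInstanceAs (Finite ((Σ w : {x : PT p // x.isLeft = c}, TF ↥p.1 ↥p.2 w.1) ×
    (Σ _u : {a : α // a ∉ p.1},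
      ({m : QT p // m.isLeft = !c} ×
        TF {a : α // a ∉ p.1} {b : β // b ∉ p.2} (inl _u)))))

lemma card_fin_compl {n : ℕ} (A : Finset (Fin n)) :
    Nat.card {a : Fin n // a ∉ A} = n - A.card := by
  rw [Nat.card_eq_fintype_card]
  have := Fintype.card_subtype_compl (fun a : Fin n => a ∈ A)
  simp only [Fintype.card_fin] at this
  rw [this, Fintype.card_coe]

lemma card_LHS_false (r s : ℕ) :
    Nat.card (LHSt (Fin r) (Fin s) false) = r * (s * Nbi r s 0) := by
  rw [LHSt, ncard_sigma]
  have h : ∀ u : Fin r,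
      Nat.card ({w : Fin r ⊕ Fin s // w.isLeft = false ∧ w ≠ inl u} ×
        TF (Fin r) (Fin s) (inl u)) = s * Nbi r s 0 := by
    intro u
    rw [Nat.card_prod, Nat.card_congr (marksFalseEquiv _ _ u), card_TF]
    simp [Nat.card_eq_fintype_card]
  rw [Finset.sum_congr rfl (fun u _ => h u)]
  simp [Finset.sum_const, Finset.card_univ, mul_comm]

lemma card_LHS_true (r s : ℕ) :
    Nat.card (LHSt (Fin r) (Fin s) true) = r * ((r - 1) * Nbi r s 0) := by
  rw [LHSt, ncard_sigma]
  have h : ∀ u : Fin r,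
      Nat.card ({w : Fin r ⊕ Fin s // w.isLeft = true ∧ w ≠ inl u} ×
        TF (Fin r) (Fin s) (inl u)) = (r - 1) * Nbi r s 0 := by
    intro u
    rw [Nat.card_prod, Nat.card_congr (marksTrueEquiv _ _ u), card_TF]
    have h2 : Nat.card {a : Fin r // a ≠ u} = r - 1 := by
      rw [Nat.card_eq_fintype_card]
      have := Fintype.card_subtype_compl (fun a : Fin r => a = u)
      simp only [Fintype.card_fin, Fintype.card_subtype_eq] at this
      exact this
    rw [h2]
    simp [Nat.card_eq_fintype_card]
  rw [Finset.sum_congr rfl (fun u _ => h u)]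
  simp [Finset.sum_const, Finset.card_univ, mul_comm]

lemma card_sum_TF {r s : ℕ} (p : Finset (Fin r) × Finset (Fin s)) (c : Bool) :
    Nat.card (Σ w : {x : PT p // x.isLeft = c}, TF ↥p.1 ↥p.2 w.1) =
      (if c then p.1.card else p.2.card) * Nbi p.1.card p.2.card 0 := by
  rw [ncard_sigma]
  have h : ∀ w : {x : PT p // x.isLeft = c},
      Nat.card (TF ↥p.1 ↥p.2 w.1) = Nbi p.1.card p.2.card 0 := by
    intro w
    rw [card_TF]
    simp [Fintype.card_coe]
  rw [Finset.sum_congr rfl (fun w _ => h w), Finset.sum_const, Finset.card_univ, smul_eq_mul]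
  congr 1
  cases c
  · rw [Fintype.card_congr (rightSideEquiv ↥p.1 ↥p.2), Fintype.card_coe]
    simp
  · rw [Fintype.card_congr (leftSideEquiv ↥p.1 ↥p.2), Fintype.card_coe]
    simp

lemma card_co_marks {r s : ℕ} (p : Finset (Fin r) × Finset (Fin s)) (c : Bool) :
    Nat.card {m : QT p // m.isLeft = !c} =
      (if c then s - p.2.card else r - p.1.card) := by
  rw [Nat.card_eq_fintype_card]
  cases c
  · rw [show (!false) = true from rfl,
      Fintype.card_congr (leftSideEquiv {a : Fin r // a ∉ p.1} {b : Fin s // b ∉ p.2})]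
    rw [← Nat.card_eq_fintype_card, card_fin_compl]
    simp
  · rw [show (!true) = false from rfl,
      Fintype.card_congr (rightSideEquiv {a : Fin r // a ∉ p.1} {b : Fin s // b ∉ p.2})]
    rw [← Nat.card_eq_fintype_card]
    have : Nat.card {b : Fin s // b ∉ p.2} = s - p.2.card := by
      rw [Nat.card_eq_fintype_card]
      have := Fintype.card_subtype_compl (fun b : Fin s => b ∈ p.2)
      simp only [Fintype.card_fin] at this
      rw [this, Fintype.card_coe]
    rw [this]
    simp

lemma card_TF_co {r s : ℕ} (p : Finset (Fin r) × Finset (Fin s))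
    (z : {a : Fin r // a ∉ p.1} ⊕ {b : Fin s // b ∉ p.2}) :
    Nat.card (TF {a : Fin r // a ∉ p.1} {b : Fin s // b ∉ p.2} z) =
      Nbi (r - p.1.card) (s - p.2.card) 0 := by
  rw [card_TF]
  have h1 := card_fin_compl p.1
  have h2 : Nat.card {b : Fin s // b ∉ p.2} = s - p.2.card := by
    rw [Nat.card_eq_fintype_card]
    have := Fintype.card_subtype_compl (fun b : Fin s => b ∈ p.2)
    simp only [Fintype.card_fin] at this
    rw [this, Fintype.card_coe]
  rw [Nat.card_eq_fintype_card] at h1 h2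
  rw [h1, h2]

lemma card_RHSt (r s : ℕ) (c : Bool) (p : Finset (Fin r) × Finset (Fin s)) :
    Nat.card (RHSt (Fin r) (Fin s) c p) =
      ((if c then p.1.card else p.2.card) * Nbi p.1.card p.2.card 0) *
      ((r - p.1.card) * ((if c then s - p.2.card else r - p.1.card) *
        Nbi (r - p.1.card) (s - p.2.card) 0)) := by
  rw [RHSt, Nat.card_prod, card_sum_TF]
  congr 1
  rw [ncard_sigma]
  have h : ∀ u : {a : Fin r // a ∉ p.1},
      Nat.card ({m : QT p // m.isLeft = !c} ×
        TF {a : Fin r // a ∉ p.1} {b : Fin s // b ∉ p.2} (inl u)) =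
      (if c then s - p.2.card else r - p.1.card) *
        Nbi (r - p.1.card) (s - p.2.card) 0 := by
    intro u
    rw [Nat.card_prod, card_co_marks, card_TF_co]
  rw [Finset.sum_congr rfl (fun u _ => h u), Finset.sum_const, Finset.card_univ, smul_eq_mul]
  rw [← Nat.card_eq_fintype_card, card_fin_compl]

lemma sum_card_finsets {n : ℕ} (g : ℕ → ℕ) :
    ∑ A : Finset (Fin n), g A.card = ∑ k ∈ Finset.range (n + 1), n.choose k * g k := by
  have h0 : ∑ A : Finset (Fin n), g A.card
      = ∑ A ∈ (Finset.univ : Finset (Fin n)).powerset, g A.card := by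
    rw [Finset.powerset_univ]
  rw [h0, Finset.sum_powerset]
  have hcard : (Finset.univ : Finset (Fin n)).card = n := by
    rw [Finset.card_univ, Fintype.card_fin]
  rw [hcard]
  refine Finset.sum_congr rfl ?_
  intro k _
  rw [Finset.sum_powersetCard, hcard, smul_eq_mul]

lemma card_RHS_sum (r s : ℕ) (c : Bool) :
    Nat.card (Σ p : Finset (Fin r) × Finset (Fin s), RHSt (Fin r) (Fin s) c p) =
      ∑ k ∈ Finset.range (r + 1), ∑ l ∈ Finset.range (s + 1),
        r.choose k * (s.choose l *
          (((if c then k else l) * Nbi k l 0) *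
          ((r - k) * ((if c then s - l else r - k) * Nbi (r - k) (s - l) 0)))) := by
  rw [ncard_sigma]
  rw [Finset.sum_congr rfl (fun p _ => card_RHSt r s c p)]
  rw [Fintype.sum_prod_type]
  have h1 : ∀ A : Finset (Fin r),
      (∑ B : Finset (Fin s),
        ((if c then A.card else B.card) * Nbi A.card B.card 0) *
        ((r - A.card) * ((if c then s - B.card else r - A.card) *
          Nbi (r - A.card) (s - B.card) 0)))
      = ∑ l ∈ Finset.range (s + 1), s.choose l *
          (((if c then A.card else l) * Nbi A.card l 0) *
          ((r - A.card) * ((if c then s - l else r - A.card) *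
            Nbi (r - A.card) (s - l) 0))) := by
    intro A
    exact sum_card_finsets (fun l =>
      ((if c then A.card else l) * Nbi A.card l 0) *
      ((r - A.card) * ((if c then s - l else r - A.card) * Nbi (r - A.card) (s - l) 0)))
  rw [Finset.sum_congr rfl (fun A _ => h1 A)]
  rw [sum_card_finsets (fun k =>
    ∑ l ∈ Finset.range (s + 1), s.choose l *
      (((if c then k else l) * Nbi k l 0) *
      ((r - k) * ((if c then s - l else r - k) * Nbi (r - k) (s - l) 0))))]
  refine Finset.sum_congr rfl ?_
  intro k _
  rw [Finset.mul_sum]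

end Counting2

theorem master_false (r s : ℕ) :
    r * s * Nbi r s 0 =
      ∑ p ∈ Finset.HasAntidiagonal.antidiagonal r, ∑ q ∈ Finset.HasAntidiagonal.antidiagonal s,
        r.choose p.1 * s.choose q.1 *
          (q.1 * Nbi p.1 q.1 0) * (p.2 * p.2 * Nbi p.2 q.2 0) := by
  have hbij := Nat.card_eq_of_bijective (Glue (Fin r) (Fin s) false)
    ⟨Glue_inj false, Glue_surj false⟩
  rw [card_LHS_false, card_RHS_sum] at hbij
  have h1 : r * s * Nbi r s 0 = r * (s * Nbi r s 0) := by ring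
  rw [h1, ← hbij]
  rw [Finset.Nat.sum_antidiagonal_eq_sum_range_succ_mk]
  refine Finset.sum_congr rfl ?_
  intro k _
  rw [Finset.Nat.sum_antidiagonal_eq_sum_range_succ_mk]
  refine Finset.sum_congr rfl ?_
  intro l _
  simp only [Bool.false_eq_true, if_false]
  ring

theorem master_true (r s : ℕ) :
    r * (r - 1) * Nbi r s 0 =
      ∑ p ∈ Finset.HasAntidiagonal.antidiagonal r, ∑ q ∈ Finset.HasAntidiagonal.antidiagonal s,
        r.choose p.1 * s.choose q.1 *
          (p.1 * Nbi p.1 q.1 0) * (p.2 * q.2 * Nbi p.2 q.2 0) := by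
  have hbij := Nat.card_eq_of_bijective (Glue (Fin r) (Fin s) true)
    ⟨Glue_inj true, Glue_surj true⟩
  rw [card_LHS_true, card_RHS_sum] at hbij
  have h1 : r * (r - 1) * Nbi r s 0 = r * ((r - 1) * Nbi r s 0) := by ring
  rw [h1, ← hbij]
  rw [Finset.Nat.sum_antidiagonal_eq_sum_range_succ_mk]
  refine Finset.sum_congr rfl ?_
  intro k _
  rw [Finset.Nat.sum_antidiagonal_eq_sum_range_succ_mk]
  refine Finset.sum_congr rfl ?_
  intro l _
  simp only [if_true]
  ring

noncomputable def Tx2 : MvPowerSeries (Fin 2) ℚ :=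
  fun m => (m 0 : ℚ) * (m 0 : ℚ) * (Nbi (m 0) (m 1) 0 : ℚ) / ((m 0).factorial * (m 1).factorial)

noncomputable def fin2 (x y : ℕ) : Fin 2 →₀ ℕ := Finsupp.single 0 x + Finsupp.single 1 y
lemma fin2_0 (x y : ℕ) : fin2 x y 0 = x := by simp [fin2, Finsupp.single_apply]
lemma fin2_1 (x y : ℕ) : fin2 x y 1 = y := by simp [fin2, Finsupp.single_apply]
lemma fin2_eta (m : Fin 2 →₀ ℕ) : fin2 (m 0) (m 1) = m := by
  ext i
  have h : i = 0 ∨ i = 1 := by fin_cases i <;> simp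
  rcases h with h | h <;> subst h <;> simp [fin2_0, fin2_1]

lemma sum_antidiag_finsupp (m : Fin 2 →₀ ℕ) (F : ℕ → ℕ → ℕ → ℕ → ℚ) :
    ∑ p ∈ antidiagonal m, F (p.1 0) (p.2 0) (p.1 1) (p.2 1)
    = ∑ a ∈ antidiagonal (m 0), ∑ b ∈ antidiagonal (m 1), F a.1 a.2 b.1 b.2 := by
  rw [← Finset.sum_product']
  refine Finset.sum_nbij' (i := fun p => ((p.1 0, p.2 0), (p.1 1, p.2 1)))
    (j := fun q => (fin2 q.1.1 q.2.1, fin2 q.1.2 q.2.2)) ?_ ?_ ?_ ?_ ?_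
  · rintro ⟨p1, p2⟩ hp
    rw [Finset.HasAntidiagonal.mem_antidiagonal] at hp
    simp only [Finset.mem_product, Finset.HasAntidiagonal.mem_antidiagonal]
    constructor
    · have := congrArg (fun f => f 0) hp; simpa using this
    · have := congrArg (fun f => f 1) hp; simpa using this
  · rintro ⟨⟨a1, a2⟩, ⟨b1, b2⟩⟩ hq
    simp only [Finset.mem_product, Finset.HasAntidiagonal.mem_antidiagonal] at hq
    rw [Finset.HasAntidiagonal.mem_antidiagonal]
    have : fin2 a1 b1 + fin2 a2 b2 = fin2 (a1 + a2) (b1 + b2) := by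
      ext i
      have h : i = 0 ∨ i = 1 := by fin_cases i <;> simp
      rcases h with h | h <;> subst h <;> simp [fin2_0, fin2_1]
    rw [this, hq.1, hq.2, fin2_eta]
  · rintro ⟨p1, p2⟩ _
    simp only [Prod.mk.injEq]
    exact ⟨fin2_eta p1, fin2_eta p2⟩
  · rintro ⟨⟨a1, a2⟩, ⟨b1, b2⟩⟩ _
    simp [fin2_0, fin2_1]
  · rintro ⟨p1, p2⟩ _
    rfl

lemma key_div (r1 r2 s1 s2 : ℕ) (X Y : ℚ) :
    ((r1+r2).choose r1 * (s1+s2).choose s1 * X * Y : ℚ) / ((r1+r2).factorial * (s1+s2).factorial)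
    = X / (r1.factorial * s1.factorial) * (Y / (r2.factorial * s2.factorial)) := by
  rw [Nat.cast_choose ℚ (Nat.le_add_right r1 r2), Nat.cast_choose ℚ (Nat.le_add_right s1 s2)]
  have h1 : r1 + r2 - r1 = r2 := by omega
  have h2 : s1 + s2 - s1 = s2 := by omega
  rw [h1, h2]
  field_simp

lemma conv_eval (m : Fin 2 →₀ ℕ) (G H : ℕ → ℕ → ℚ) :
    (∑ p ∈ antidiagonal m,
        (G (p.1 0) (p.1 1) / ((p.1 0).factorial * (p.1 1).factorial)) *
        (H (p.2 0) (p.2 1) / ((p.2 0).factorial * (p.2 1).factorial)))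
    = (∑ a ∈ antidiagonal (m 0), ∑ b ∈ antidiagonal (m 1),
        ((m 0).choose a.1 * (m 1).choose b.1 : ℚ) * G a.1 b.1 * H a.2 b.2) /
      ((m 0).factorial * (m 1).factorial) := by
  rw [sum_antidiag_finsupp m (fun r1 r2 s1 s2 =>
    (G r1 s1 / (r1.factorial * s1.factorial)) * (H r2 s2 / (r2.factorial * s2.factorial)))]
  rw [Finset.sum_div]
  refine Finset.sum_congr rfl ?_
  rintro ⟨a1, a2⟩ ha
  rw [Finset.sum_div]
  refine Finset.sum_congr rfl ?_
  rintro ⟨b1, b2⟩ hb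
  rw [Finset.HasAntidiagonal.mem_antidiagonal] at ha hb
  simp only at *
  rw [← ha, ← hb, key_div]

theorem S1 : Txy = Ty * Tx2 := by
  apply MvPowerSeries.ext; intro m
  rw [MvPowerSeries.coeff_mul]
  have h := conv_eval m (fun r s => (s : ℚ) * (Nbi r s 0 : ℚ))
    (fun r s => (r : ℚ) * (r : ℚ) * (Nbi r s 0 : ℚ))
  have hL : (∑ p ∈ antidiagonal m, (MvPowerSeries.coeff p.1) Ty * (MvPowerSeries.coeff p.2) Tx2)
      = ∑ p ∈ antidiagonal m,
        (((p.1 1 : ℚ) * (Nbi (p.1 0) (p.1 1) 0 : ℚ)) / ((p.1 0).factorial * (p.1 1).factorial)) *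
        (((p.2 0 : ℚ) * (p.2 0 : ℚ) * (Nbi (p.2 0) (p.2 1) 0 : ℚ)) / ((p.2 0).factorial * (p.2 1).factorial)) := by
    refine Finset.sum_congr rfl ?_
    intro p _
    show (Ty p.1) * (Tx2 p.2) = _
    simp only [Ty, Tx2]
  rw [hL, h]
  show ((m 0 : ℚ) * (m 1 : ℚ) * (Nbi (m 0) (m 1) 0 : ℚ)) / _ = _
  congr 1
  have := master_false (m 0) (m 1)
  have hc : ((m 0 * m 1 * Nbi (m 0) (m 1) 0 : ℕ) : ℚ)
      = ((∑ p ∈ antidiagonal (m 0), ∑ q ∈ antidiagonal (m 1),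
          (m 0).choose p.1 * (m 1).choose q.1 * (q.1 * Nbi p.1 q.1 0) * (p.2 * p.2 * Nbi p.2 q.2 0) : ℕ) : ℚ) := by
    exact_mod_cast congrArg (Nat.cast (R := ℚ)) this
  push_cast at hc
  rw [← hc]

theorem S2 : Tx2 = Tx + Tx * Txy := by
  apply MvPowerSeries.ext; intro m
  rw [map_add, MvPowerSeries.coeff_mul]
  have h := conv_eval m (fun r s => (r : ℚ) * (Nbi r s 0 : ℚ))
    (fun r s => (r : ℚ) * (s : ℚ) * (Nbi r s 0 : ℚ))
  have hL : (∑ p ∈ antidiagonal m, (MvPowerSeries.coeff p.1) Tx * (MvPowerSeries.coeff p.2) Txy)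
      = ∑ p ∈ antidiagonal m,
        (((p.1 0 : ℚ) * (Nbi (p.1 0) (p.1 1) 0 : ℚ)) / ((p.1 0).factorial * (p.1 1).factorial)) *
        (((p.2 0 : ℚ) * (p.2 1 : ℚ) * (Nbi (p.2 0) (p.2 1) 0 : ℚ)) / ((p.2 0).factorial * (p.2 1).factorial)) := by
    refine Finset.sum_congr rfl ?_
    intro p _
    show (Tx p.1) * (Txy p.2) = _
    simp only [Tx, Txy]
  rw [hL, h]
  show ((m 0 : ℚ) * (m 0 : ℚ) * (Nbi (m 0) (m 1) 0 : ℚ)) / _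
      = ((m 0 : ℚ) * (Nbi (m 0) (m 1) 0 : ℚ)) / _ + _
  rw [← add_div]
  congr 1
  have := master_true (m 0) (m 1)
  have hc : ((m 0 * (m 0 - 1) * Nbi (m 0) (m 1) 0 : ℕ) : ℚ)
      = ((∑ p ∈ antidiagonal (m 0), ∑ q ∈ antidiagonal (m 1),
          (m 0).choose p.1 * (m 1).choose q.1 * (p.1 * Nbi p.1 q.1 0) * (p.2 * q.2 * Nbi p.2 q.2 0) : ℕ) : ℚ) := by
    exact_mod_cast congrArg (Nat.cast (R := ℚ)) this
  push_cast at hc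
  rw [← hc]
  rcases Nat.eq_zero_or_pos (m 0) with h0 | h0
  · rw [h0]; push_cast; ring
  · have h1 : ((m 0 - 1 : ℕ) : ℚ) = (m 0 : ℚ) - 1 := by
      have : (1 : ℕ) ≤ m 0 := h0
      push_cast [Nat.cast_sub this]; ring
    rw [h1]; ring


end Stmt9Aux

/-- `T_xy·(1 - T_x·T_y) = T_x·T_y` as formal power series. -/
theorem stmt9 : Txy * (1 - Tx * Ty) = Tx * Ty := by
  linear_combination Stmt9Aux.S1 + Ty * Stmt9Aux.S2
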